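/- If coarse structures E and E' on a set X are λ-equivalent, then they have the same macro-uniform real-valued functions: mu(X, E) = mu(X, E'). -/

import Mathlib

open Set

/-- A coarse structure (ballean) on a set `X`. -/
structure CoarseStruct (X : Type*) where
  sets : Set (Set (X × X))
  diagonal_mem : Set.diagonal X ∈ sets
  diagonal_subset : ∀ E ∈ sets, Set.diagonal X ⊆ E
  comp_mem : ∀ E ∈ sets, ∀ F ∈ sets,
    {p : X × X | ∃ z, (p.1, z) ∈ E ∧ (z, p.2) ∈ F} ∈ sets
  inv_mem : ∀ E ∈ sets, {p : X × X | (p.2, p.1) ∈ E} ∈ sets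
  subset_mem : ∀ E ∈ sets, ∀ E' : Set (X × X),
    Set.diagonal X ⊆ E' → E' ⊆ E → E' ∈ sets
  cover : ∀ p : X × X, ∃ E ∈ sets, p ∈ E

namespace CoarseStruct

variable {X : Type*}

/-- The ball `E[A]` of radius `E` around `A`. -/
def ball (E : Set (X × X)) (A : Set X) : Set X := {y | ∃ a ∈ A, (a, y) ∈ E}

/-- A set is bounded if it is contained in a ball around a point. -/
def IsBounded (C : CoarseStruct X) (B : Set X) : Prop :=
  ∃ E ∈ C.sets, ∃ x : X, B ⊆ ball E {x}

/-- Closeness: `A δ B`. -/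
def Close (C : CoarseStruct X) (A B : Set X) : Prop :=
  ∃ E ∈ C.sets, A ⊆ ball E B ∧ B ⊆ ball E A

/-- Linkness: `A λ B`. -/
def Linked (C : CoarseStruct X) (A B : Set X) : Prop :=
  (C.IsBounded A ∧ C.IsBounded B) ∨
  ∃ A' B' : Set X, A' ⊆ A ∧ B' ⊆ B ∧ ¬C.IsBounded A' ∧ ¬C.IsBounded B' ∧ C.Close A' B'

def LambdaEquiv (C C' : CoarseStruct X) : Prop :=
  ∀ A B : Set X, C.Linked A B ↔ C'.Linked A B

def DeltaEquiv (C C' : CoarseStruct X) : Prop :=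
  ∀ A B : Set X, C.Close A B ↔ C'.Close A B

def Discrete (C : CoarseStruct X) : Prop :=
  ∀ E ∈ C.sets, ∃ B : Set X, C.IsBounded B ∧ ∀ x ∉ B, ball E {x} = {x}

def Large (C : CoarseStruct X) (Y : Set X) : Prop :=
  ∃ E ∈ C.sets, ball E Y = Set.univ

/-- The subballean on `Y` is discrete. -/
def DiscreteOn (C : CoarseStruct X) (Y : Set X) : Prop :=
  ∀ E ∈ C.sets, ∃ B : Set X, C.IsBounded B ∧ ∀ y ∈ Y \ B, ball E {y} ∩ Y = {y}

def CoarselyDiscrete (C : CoarseStruct X) : Prop :=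
  ∃ Y : Set X, C.Large Y ∧ C.DiscreteOn Y

def LambdaRigid (C : CoarseStruct X) : Prop :=
  ∀ C' : CoarseStruct X, LambdaEquiv C C' → C' = C

def DeltaRigid (C : CoarseStruct X) : Prop :=
  ∀ C' : CoarseStruct X, DeltaEquiv C C' → C' = C

def IsBase (C : CoarseStruct X) (B : Set (Set (X × X))) : Prop :=
  B ⊆ C.sets ∧ ∀ E ∈ C.sets, ∃ E' ∈ B, E ⊆ E'

/-- Metrizable: the coarse structure has a countable base. -/
def Metrizable (C : CoarseStruct X) : Prop :=
  ∃ B : Set (Set (X × X)), B.Countable ∧ C.IsBase B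

/-- Ordinal: the coarse structure has a base linearly ordered by inclusion. -/
def Ordinal (C : CoarseStruct X) : Prop :=
  ∃ B : Set (Set (X × X)), C.IsBase B ∧ IsChain (· ⊆ ·) B

def MacroUniform (C : CoarseStruct X) (f : X → ℝ) : Prop :=
  ∀ E ∈ C.sets, ∃ r : ℝ, 0 < r ∧
    ∀ x : X, ∀ y ∈ ball E {x}, ∀ z ∈ ball E {x}, |f y - f z| ≤ r

def Submetrizable (C : CoarseStruct X) : Prop :=
  ¬C.IsBounded Set.univ ∧ ∃ C'' : CoarseStruct X,
    C.sets ⊆ C''.sets ∧ ¬C''.IsBounded Set.univ ∧ C''.Metrizable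

def SlowlyOscillating (C : CoarseStruct X) (f : X → ℝ) : Prop :=
  ∀ E ∈ C.sets, ∀ ε : ℝ, 0 < ε → ∃ B : Set X, C.IsBounded B ∧
    ∀ x ∉ B, ∀ y ∈ ball E {x}, ∀ z ∈ ball E {x}, |f y - f z| < ε

/-- The entourage `H_{(E,Φ)}`: `H[x] = {x}` for `x ∈ Φ` and `H[x] = E[x] \ Φ` for `x ∉ Φ`. -/
def EPhiBase (E : Set (X × X)) (Φ : Set X) : Set (X × X) :=
  {p | (p.1 ∈ Φ ∧ p.1 = p.2) ∨ (p.1 ∉ Φ ∧ p.2 ∉ Φ ∧ (p.1, p.2) ∈ E)}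

/-- The family of entourages of the coarse structure `E_φ` with base `{H_{(E,Φ)}}`. -/
def EPhiSets (C : CoarseStruct X) (φ : Filter X) : Set (Set (X × X)) :=
  {E' | Set.diagonal X ⊆ E' ∧ ∃ E ∈ C.sets, ∃ Φ ∈ φ, E' ⊆ EPhiBase E Φ}

/-- The set `B♯` of ultrafilters containing the complement of every bounded set. -/
def Bsharp (C : CoarseStruct X) : Set (Ultrafilter X) :=
  {p | ∀ B : Set X, C.IsBounded B → Bᶜ ∈ p}

/-- Parallelity of ultrafilters: `p ∥ q`. -/
def Parallel (C : CoarseStruct X) (p q : Ultrafilter X) : Prop :=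
  ∃ E ∈ C.sets, ∀ P ∈ p, ball E P ∈ q

def AsympDisjoint (C : CoarseStruct X) (A B : Set X) : Prop :=
  ∀ E ∈ C.sets, C.IsBounded (ball E A ∩ ball E B)

def AsympNbhd (C : CoarseStruct X) (A U : Set X) : Prop :=
  ∀ E ∈ C.sets, C.IsBounded (ball E A \ U)

def Normal (C : CoarseStruct X) : Prop :=
  ∀ A B : Set X, C.AsympDisjoint A B →
    ∃ U V : Set X, C.AsympNbhd A U ∧ C.AsympNbhd B V ∧ Disjoint U V

end CoarseStruct

namespace CoarseStruct

variable {X : Type*}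

lemma isBounded_mono (C : CoarseStruct X) {A B : Set X} (h : A ⊆ B) (hB : C.IsBounded B) :
    C.IsBounded A := by
  obtain ⟨E, hE, x, hx⟩ := hB
  exact ⟨E, hE, x, h.trans hx⟩

lemma isBounded_singleton (C : CoarseStruct X) (x : X) : C.IsBounded {x} :=
  ⟨Set.diagonal X, C.diagonal_mem, x, by rintro y rfl; exact ⟨y, rfl, rfl⟩⟩

lemma isBounded_of_subset_singleton (C : CoarseStruct X) {A : Set X} {x : X} (h : A ⊆ {x}) :
    C.IsBounded A :=
  C.isBounded_mono h (C.isBounded_singleton x)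

lemma isBounded_union (C : CoarseStruct X) {A B : Set X}
    (hA : C.IsBounded A) (hB : C.IsBounded B) : C.IsBounded (A ∪ B) := by
  obtain ⟨E1, hE1, x1, h1⟩ := hA
  obtain ⟨E2, hE2, x2, h2⟩ := hB
  obtain ⟨E0, hE0, hx⟩ := C.cover (x1, x2)
  set K : Set (X × X) := {p : X × X | ∃ w, (p.1, w) ∈ E0 ∧ (w, p.2) ∈ E2} with hK
  have hKmem : K ∈ C.sets := C.comp_mem E0 hE0 E2 hE2
  refine ⟨{p : X × X | ∃ z, (p.1, z) ∈ E1 ∧ (z, p.2) ∈ K},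
    C.comp_mem E1 hE1 K hKmem, x1, ?_⟩
  rintro y (hy | hy)
  · obtain ⟨a, ha, hpair⟩ := h1 hy
    rcases ha with rfl
    exact ⟨a, rfl, ⟨y, hpair, ⟨y, C.diagonal_subset E0 hE0 rfl, C.diagonal_subset E2 hE2 rfl⟩⟩⟩
  · obtain ⟨a, ha, hpair⟩ := h2 hy
    rcases ha with rfl
    exact ⟨x1, rfl, ⟨x1, C.diagonal_subset E1 hE1 rfl, ⟨a, hx, hpair⟩⟩⟩

lemma isBounded_of_finite (C : CoarseStruct X) (x₀ : X) {A : Set X} (hA : A.Finite) :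
    C.IsBounded A := by
  refine Set.Finite.induction_on A hA ⟨Set.diagonal X, C.diagonal_mem, x₀, by rintro y ⟨⟩⟩ ?_
  intro a s _ _ ih
  have : insert a s = {a} ∪ s := by simp
  rw [this]
  exact C.isBounded_union (C.isBounded_singleton a) ih

lemma infinite_of_not_isBounded (C : CoarseStruct X) (x₀ : X) {A : Set X}
    (h : ¬ C.IsBounded A) : A.Infinite := by
  by_contra hinf
  rw [Set.not_infinite] at hinf
  exact h (C.isBounded_of_finite x₀ hinf)

lemma isBounded_of_lambdaEquiv {C C' : CoarseStruct X} (h : LambdaEquiv C C') {B : Set X}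
    (hB : C.IsBounded B) : C'.IsBounded B := by
  obtain ⟨E, hE, x, hx⟩ := hB
  have hL : C.Linked B {x} := Or.inl ⟨⟨E, hE, x, hx⟩, C.isBounded_singleton x⟩
  rcases (h B {x}).mp hL with ⟨h1, _⟩ | ⟨B'', S'', _, hS'', _, hSunb, _⟩
  · exact h1
  · exact absurd (C'.isBounded_of_subset_singleton hS'') hSunb

lemma isBounded_ball_of (C : CoarseStruct X) {A B : Set X} {G : Set (X × X)}
    (hG : G ∈ C.sets) (hA : C.IsBounded A) (hB : B ⊆ ball G A) : C.IsBounded B := by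
  obtain ⟨E, hE, x, hx⟩ := hA
  refine ⟨{p : X × X | ∃ z, (p.1, z) ∈ E ∧ (z, p.2) ∈ G}, C.comp_mem E hE G hG, x, ?_⟩
  intro y hy
  obtain ⟨a, haA, hpair⟩ := hB hy
  obtain ⟨a', ha', hpair'⟩ := hx haA
  rcases ha' with rfl
  exact ⟨a', rfl, ⟨a, hpair', hpair⟩⟩

lemma mu_bounded_image {C : CoarseStruct X} {f : X → ℝ} (hf : C.MacroUniform f) {B : Set X}
    (hB : C.IsBounded B) : ∃ r : ℝ, ∀ y ∈ B, ∀ z ∈ B, |f y - f z| ≤ r := by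
  obtain ⟨E, hE, x, hx⟩ := hB
  obtain ⟨r, _, hr⟩ := hf E hE
  exact ⟨r, fun y hy z hz => hr x y (hx hy) z (hx hz)⟩

end CoarseStruct

namespace CoarseStruct

lemma macroUniform_of_lambdaEquiv {X : Type*} {C C' : CoarseStruct X} (h : LambdaEquiv C C')
    {f : X → ℝ} (hf : C.MacroUniform f) : C'.MacroUniform f := by
  intro E' hE'
  by_cases hXe : IsEmpty X
  · exact ⟨1, one_pos, fun x => (hXe.false x).elim⟩
  rw [not_isEmpty_iff] at hXe
  by_contra hcon
  push_neg at hcon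
  set G : Set (X × X) := {p : X × X | ∃ t, (t, p.1) ∈ E' ∧ (t, p.2) ∈ E'} with hGdef
  have hGmem : G ∈ C'.sets := by
    have hGeq : G = {q : X × X | ∃ z, (q.1, z) ∈ {w : X × X | (w.2, w.1) ∈ E'} ∧ (z, q.2) ∈ E'} := by
      ext ⟨u, v⟩
      constructor
      · rintro ⟨t, h1, h2⟩; exact ⟨t, h1, h2⟩
      · rintro ⟨t, h1, h2⟩; exact ⟨t, h1, h2⟩
    rw [hGeq]
    exact C'.comp_mem _ (C'.inv_mem E' hE') E' hE'
  -- selection of pairs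
  have hsel : ∀ r : ℝ, ∃ q : X × X, (q.1, q.2) ∈ G ∧ (q.2, q.1) ∈ G ∧
      r < |f q.1 - f q.2| ∧ |f q.1| ≤ |f q.2| := by
    intro r
    obtain ⟨x, y, hy, z, hz, hyz⟩ := hcon (max r 0 + 1) (by positivity)
    obtain ⟨ay, hay, hpy⟩ := hy
    obtain ⟨az, haz, hpz⟩ := hz
    rw [Set.mem_singleton_iff] at hay haz
    subst hay; subst haz
    have hyzG : (y, z) ∈ G := ⟨_, hpy, hpz⟩
    have hzyG : (z, y) ∈ G := ⟨_, hpz, hpy⟩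
    have hrlt : r < |f y - f z| := lt_of_le_of_lt (le_trans (le_max_left r 0) (by linarith)) hyz
    by_cases hord : |f y| ≤ |f z|
    · exact ⟨(y, z), hyzG, hzyG, hrlt, hord⟩
    · exact ⟨(z, y), hzyG, hyzG, by rwa [abs_sub_comm], le_of_not_ge hord⟩
  choose Q hQ1 hQ2 hQ3 hQ4 using hsel
  obtain ⟨p, hp0, hpS⟩ : ∃ p : ℕ → X × X, p 0 = Q 0 ∧
      ∀ n : ℕ, p (n + 1) = Q (2 * (|f (p n).2| + (n : ℝ) + 2)) :=
    ⟨fun n => Nat.rec (Q 0) (fun n ih => Q (2 * (|f ih.2| + (n : ℝ) + 2))) n, rfl, fun n => rfl⟩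
  have habG : ∀ n : ℕ, ((p n).1, (p n).2) ∈ G ∧ ((p n).2, (p n).1) ∈ G := by
    intro n
    cases n with
    | zero => rw [hp0]; exact ⟨hQ1 0, hQ2 0⟩
    | succ n => rw [hpS]; exact ⟨hQ1 _, hQ2 _⟩
  have hord : ∀ n : ℕ, |f (p n).1| ≤ |f (p n).2| := by
    intro n
    cases n with
    | zero => rw [hp0]; exact hQ4 0
    | succ n => rw [hpS]; exact hQ4 _
  have hdiff : ∀ n : ℕ, (n : ℝ) < |f (p n).1 - f (p n).2| := by
    intro n
    cases n with
    | zero => rw [hp0]; simpa using hQ3 0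
    | succ n =>
      rw [hpS]
      refine lt_of_le_of_lt ?_ (hQ3 _)
      have := abs_nonneg (f (p n).2)
      push_cast
      linarith
  have hstep : ∀ n : ℕ, |f (p n).2| + (n : ℝ) + 2 < |f (p (n + 1)).2| := by
    intro n
    have h3 : 2 * (|f (p n).2| + (n : ℝ) + 2) < |f (p (n + 1)).1 - f (p (n + 1)).2| := by
      rw [hpS]; exact hQ3 _
    have h4 := hord (n + 1)
    have h5 : |f (p (n + 1)).1 - f (p (n + 1)).2| ≤ |f (p (n + 1)).1| + |f (p (n + 1)).2| :=
      abs_sub _ _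
    nlinarith
  have hbig : ∀ n : ℕ, (n : ℝ) < |f (p n).2| := by
    intro n
    cases n with
    | zero =>
      have h1 := hdiff 0
      have h2 := hord 0
      have h5 : |f (p 0).1 - f (p 0).2| ≤ |f (p 0).1| + |f (p 0).2| := abs_sub _ _
      push_cast at h1 ⊢
      nlinarith
    | succ n =>
      have h1 := hstep n
      have h2 := abs_nonneg (f (p n).2)
      push_cast
      linarith
  have hbmono : StrictMono (fun n => |f (p n).2|) := by
    apply strictMono_nat_of_lt_succ
    intro n
    have h1 := hstep n
    have h2 : (0 : ℝ) ≤ (n : ℝ) := Nat.cast_nonneg n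
    show |f (p n).2| < |f (p (n + 1)).2|
    linarith
  -- common final argument
  have hfinal : ∀ (Y Z : ℕ → X), (∀ k : ℕ, (Y k, Z k) ∈ G ∧ (Z k, Y k) ∈ G) →
      (∀ r : ℝ, ∃ N : ℕ, ∀ k : ℕ, N ≤ k → ∀ i : ℕ, r < |f (Z k) - f (Y i)|) →
      StrictMono (fun k => |f (Z k)|) → (∀ k : ℕ, (k : ℝ) < |f (Z k)|) → False := by
    intro Y Z hYZ hsep hZmono hZbig
    have hZinj : Function.Injective Z := fun j k hjk =>
      hZmono.injective (by simp only [hjk])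
    set A : Set X := Set.range Y with hA
    set B : Set X := Set.range Z with hB
    have hBnotC : ¬ C.IsBounded B := by
      intro hbd
      obtain ⟨r, hr⟩ := mu_bounded_image hf hbd
      obtain ⟨k, hk⟩ := exists_nat_gt (r + |f (Z 0)|)
      have h1 : |f (Z k) - f (Z 0)| ≤ r := hr _ ⟨k, rfl⟩ _ ⟨0, rfl⟩
      have h2 : |f (Z k)| - |f (Z 0)| ≤ |f (Z k) - f (Z 0)| := abs_sub_abs_le_abs_sub _ _
      have h3 := hZbig k
      linarith
    have hBnotC' : ¬ C'.IsBounded B := fun hbd =>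
      hBnotC (isBounded_of_lambdaEquiv (fun A B => (h A B).symm) hbd)
    have hBsub : B ⊆ ball G A := by
      rintro _ ⟨k, rfl⟩
      exact ⟨Y k, ⟨k, rfl⟩, (hYZ k).1⟩
    have hAnotC' : ¬ C'.IsBounded A := fun hbd =>
      hBnotC' (C'.isBounded_ball_of hGmem hbd hBsub)
    have hAnotC : ¬ C.IsBounded A := fun hbd =>
      hAnotC' (isBounded_of_lambdaEquiv h hbd)
    have hclose : C'.Close A B := by
      refine ⟨G, hGmem, ?_, hBsub⟩
      rintro _ ⟨k, rfl⟩
      exact ⟨Z k, ⟨k, rfl⟩, (hYZ k).2⟩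
    have hlinked : C'.Linked A B :=
      Or.inr ⟨A, B, le_refl A, le_refl B, hAnotC', hBnotC', hclose⟩
    rcases (h A B).mpr hlinked with ⟨hbA, _⟩ |
      ⟨A', B', hA'A, hB'B, hA'unb, hB'unb, E, hEC, hc1, hc2⟩
    · exact hAnotC hbA
    obtain ⟨r, hrpos, hr⟩ := hf E hEC
    obtain ⟨N, hN⟩ := hsep r
    have hB'inf : B'.Infinite := infinite_of_not_isBounded C (Y 0) hB'unb
    have hTinf : (Z ⁻¹' B').Infinite := hB'inf.preimage (hB'B.trans (by rw [hB]))
    obtain ⟨k, hkT, hkN⟩ : ∃ k ∈ Z ⁻¹' B', N ≤ k := by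
      by_contra hc
      push_neg at hc
      exact hTinf (Set.Finite.subset (Set.finite_Iio N) (fun k hk => hc k hk))
    obtain ⟨w, hwA', hwE⟩ := hc2 hkT
    obtain ⟨i, rfl⟩ : w ∈ Set.range Y := hA'A hwA'
    have h1 : |f (Z k) - f (Y i)| ≤ r :=
      hr (Y i) (Z k) ⟨Y i, rfl, hwE⟩ (Y i) ⟨Y i, rfl, C.diagonal_subset E hEC rfl⟩
    exact absurd (hN k hkN i) (not_lt.mpr h1)
  by_cases hub : ∃ c : ℝ, ∀ n : ℕ, |f (p n).1| ≤ c
  · -- Case a: the first coordinates have bounded values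
    obtain ⟨c, hc⟩ := hub
    have hc0 : 0 ≤ c := le_trans (abs_nonneg _) (hc 0)
    refine hfinal (fun n => (p n).1) (fun n => (p n).2) habG ?_ hbmono hbig
    intro r
    refine ⟨⌈r + c⌉₊ + 1, fun k hk i => ?_⟩
    have h1 : r + c < (k : ℝ) := by
      have h2 : r + c ≤ (⌈r + c⌉₊ : ℝ) := Nat.le_ceil _
      have h3 : ((⌈r + c⌉₊ + 1 : ℕ) : ℝ) ≤ (k : ℝ) := Nat.cast_le.mpr hk
      push_cast at h3
      linarith
    have h2 : |f (p k).2| - |f (p i).1| ≤ |f (p k).2 - f (p i).1| := abs_sub_abs_le_abs_sub _ _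
    have h3 := hbig k
    have h4 := hc i
    linarith
  · -- Case b: the first coordinates have unbounded values
    push_neg at hub
    choose Nf hNf using hub
    obtain ⟨s, hs0, hsS⟩ : ∃ s : ℕ → ℕ, s 0 = 0 ∧
        ∀ k : ℕ, s (k + 1) = Nf (2 * (|f (p (s k)).2| + |f (p k).2|) + (k : ℝ) + 1) :=
      ⟨fun k => Nat.rec 0 (fun k ih => Nf (2 * (|f (p ih).2| + |f (p k).2|) + (k : ℝ) + 1)) k,
        rfl, fun k => rfl⟩
    have hs1 : ∀ k : ℕ, 2 * (|f (p (s k)).2| + |f (p k).2|) + (k : ℝ) + 1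
        < |f (p (s (k + 1))).1| := by
      intro k
      rw [hsS]
      exact hNf _
    have hsge : ∀ k : ℕ, k ≤ s k := by
      intro k
      cases k with
      | zero => exact Nat.zero_le _
      | succ k =>
        by_contra hlt
        push_neg at hlt
        have hle : s (k + 1) ≤ k := Nat.lt_succ_iff.mp hlt
        have h1 : |f (p (s (k + 1))).2| ≤ |f (p k).2| := by
          rcases Nat.eq_or_lt_of_le hle with heq | hlt'
          · rw [heq]
          · exact le_of_lt (hbmono hlt')
        have h2 := hs1 k
        have h3 := hord (s (k + 1))
        have h4 := abs_nonneg (f (p (s k)).2)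
        have h5 : (0 : ℝ) ≤ (k : ℝ) := Nat.cast_nonneg k
        have h6 := abs_nonneg (f (p k).2)
        linarith
    have hV : ∀ k : ℕ, 2 * |f (p (s k)).2| + (k : ℝ) + 1 < |f (p (s (k + 1))).2| := by
      intro k
      have h1 := hs1 k
      have h2 := hord (s (k + 1))
      have h3 := abs_nonneg (f (p k).2)
      linarith
    have hVmono : StrictMono (fun k => |f (p (s k)).2|) := by
      apply strictMono_nat_of_lt_succ
      intro k
      have h1 := hV k
      have h2 := abs_nonneg (f (p (s k)).2)
      have h3 : (0 : ℝ) ≤ (k : ℝ) := Nat.cast_nonneg k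
      show |f (p (s k)).2| < |f (p (s (k + 1))).2|
      linarith
    have hVbig : ∀ k : ℕ, (k : ℝ) < |f (p (s k)).2| := by
      intro k
      have h1 := hbig (s k)
      have h2 : (k : ℝ) ≤ ((s k : ℕ) : ℝ) := Nat.cast_le.mpr (hsge k)
      linarith
    refine hfinal (fun k => (p (s k)).1) (fun k => (p (s k)).2) (fun k => habG (s k)) ?_
      hVmono hVbig
    intro r
    obtain ⟨N, hNr⟩ := exists_nat_gt r
    refine ⟨N, fun k hk i => ?_⟩
    have hkr : r < (k : ℝ) := lt_of_lt_of_le hNr (Nat.cast_le.mpr hk)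
    have key : (k : ℝ) < |f (p (s k)).2 - f (p (s i)).1| := by
      rcases lt_trichotomy i k with hik | heq | hki
      · -- i < k
        obtain ⟨j, rfl⟩ : ∃ j, k = j + 1 :=
          ⟨k - 1, (Nat.succ_pred_eq_of_pos (Nat.pos_of_ne_zero (by omega))).symm⟩
        have hij : i ≤ j := Nat.lt_succ_iff.mp hik
        have h1 : |f (p (s i)).2| ≤ |f (p (s j)).2| := by
          rcases Nat.eq_or_lt_of_le hij with heq | hlt'
          · rw [heq]
          · exact le_of_lt (hVmono hlt')
        have h2 := hV j
        have h3 := hord (s i)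
        have h4 : |f (p (s (j + 1))).2| - |f (p (s i)).1| ≤ |f (p (s (j + 1))).2 - f (p (s i)).1| :=
          abs_sub_abs_le_abs_sub _ _
        have h5 := abs_nonneg (f (p (s j)).2)
        push_cast
        linarith
      · -- i = k
        subst heq
        have h1 := hdiff (s i)
        have h2 : (i : ℝ) ≤ ((s i : ℕ) : ℝ) := Nat.cast_le.mpr (hsge i)
        rw [abs_sub_comm]
        linarith
      · -- k < i
        obtain ⟨j, rfl⟩ : ∃ j, i = j + 1 :=
          ⟨i - 1, (Nat.succ_pred_eq_of_pos (Nat.pos_of_ne_zero (by omega))).symm⟩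
        have hkj : k ≤ j := Nat.lt_succ_iff.mp hki
        have h1 : |f (p (s k)).2| ≤ |f (p (s j)).2| := by
          rcases Nat.eq_or_lt_of_le hkj with heq | hlt'
          · rw [heq]
          · exact le_of_lt (hVmono hlt')
        have h2 := hs1 j
        have h3 : |f (p (s (j + 1))).1| - |f (p (s k)).2| ≤ |f (p (s (j + 1))).1 - f (p (s k)).2| :=
          abs_sub_abs_le_abs_sub _ _
        have h4 := abs_nonneg (f (p j).2)
        have h5 : (k : ℝ) ≤ (j : ℝ) := Nat.cast_le.mpr hkj
        have h6 := abs_nonneg (f (p (s j)).2)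
        rw [abs_sub_comm]
        linarith
    linarith

end CoarseStruct

/-- λ-equivalent coarse structures have the same macro-uniform functions. -/
theorem lambdaEquiv_macroUniform_eq {X : Type*} (C C' : CoarseStruct X)
    (h : CoarseStruct.LambdaEquiv C C') :
    ∀ f : X → ℝ, C.MacroUniform f ↔ C'.MacroUniform f := by
  intro f
  exact ⟨fun hf => CoarseStruct.macroUniform_of_lambdaEquiv h hf,
    fun hf => CoarseStruct.macroUniform_of_lambdaEquiv (fun A B => (h A B).symm) hf⟩
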